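/- For strictly convex compact sets R and G and nonzero p, the gradient of ρ_lower(p) = ⟨p/‖p‖, s_G(−p) − s_R(p)⟩ with respect to p equals (s_G(−p) − s_R(p))/‖p‖ − (p/‖p‖²)·ρ_lower(p). -/

import Mathlib

open RealInnerProductSpace

section Aux

variable {n : ℕ}

/-- Continuity of the contact function at a nonzero direction. -/
lemma contact_cont {M : Set (EuclideanSpace ℝ (Fin n))} (hMc : IsCompact M)
    {sM : EuclideanSpace ℝ (Fin n) → EuclideanSpace ℝ (Fin n)}
    (hsM : ∀ p : EuclideanSpace ℝ (Fin n), p ≠ 0 →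
      sM p ∈ M ∧ IsMaxOn (fun s => ⟪p, s⟫) M (sM p))
    (huniq : ∀ p : EuclideanSpace ℝ (Fin n), p ≠ 0 →
      ∀ s ∈ M, IsMaxOn (fun x => ⟪p, x⟫) M s → s = sM p)
    {p : EuclideanSpace ℝ (Fin n)} (hp : p ≠ 0) {ε : ℝ} (hε : 0 < ε) :
    ∃ δ > 0, ∀ q, q ≠ 0 → dist q p < δ → dist (sM q) (sM p) < ε := by
  by_contra h
  push_neg at h
  have h' : ∀ k : ℕ, ∃ q, q ≠ 0 ∧ dist q p < 1 / (k + 1) ∧ ε ≤ dist (sM q) (sM p) := by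
    intro k
    exact h (1 / (k + 1)) (by positivity)
  choose u hu0 hud hue using h'
  have hup : Filter.Tendsto u Filter.atTop (nhds p) := by
    rw [tendsto_iff_dist_tendsto_zero]
    exact squeeze_zero (fun k => dist_nonneg) (fun k => (hud k).le)
      tendsto_one_div_add_atTop_nhds_zero_nat
  obtain ⟨a, haM, φ, hφ, hφt⟩ := hMc.tendsto_subseq (fun k => (hsM (u k) (hu0 k)).1)
  have hupφ : Filter.Tendsto (fun k => u (φ k)) Filter.atTop (nhds p) :=
    hup.comp hφ.tendsto_atTop
  have hmax : IsMaxOn (fun x => ⟪p, x⟫) M a := by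
    intro y hy
    have hk : ∀ k, ⟪u (φ k), y⟫ ≤ ⟪u (φ k), sM (u (φ k))⟫ :=
      fun k => (hsM _ (hu0 _)).2 hy
    have h1 : Filter.Tendsto (fun k => ⟪u (φ k), y⟫) Filter.atTop (nhds ⟪p, y⟫) :=
      hupφ.inner tendsto_const_nhds
    have h2 : Filter.Tendsto (fun k => ⟪u (φ k), sM (u (φ k))⟫) Filter.atTop (nhds ⟪p, a⟫) :=
      hupφ.inner hφt
    exact le_of_tendsto_of_tendsto' h1 h2 hk
  have ha : a = sM p := huniq p hp a haM hmax
  have hdist : Filter.Tendsto (fun k => dist (sM (u (φ k))) (sM p)) Filter.atTop (nhds 0) := by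
    have := hφt.dist (tendsto_const_nhds (x := sM p))
    rwa [ha, dist_self] at this
  have : ε ≤ 0 := le_of_tendsto_of_tendsto' tendsto_const_nhds hdist (fun k => hue (φ k))
  linarith

/-- The support function `q ↦ ⟪q, sM q⟫` has gradient `sM p` at a nonzero `p`. -/
lemma support_hasGradientAt {M : Set (EuclideanSpace ℝ (Fin n))} (hMc : IsCompact M)
    {sM : EuclideanSpace ℝ (Fin n) → EuclideanSpace ℝ (Fin n)}
    (hsM : ∀ p : EuclideanSpace ℝ (Fin n), p ≠ 0 →
      sM p ∈ M ∧ IsMaxOn (fun s => ⟪p, s⟫) M (sM p))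
    (huniq : ∀ p : EuclideanSpace ℝ (Fin n), p ≠ 0 →
      ∀ s ∈ M, IsMaxOn (fun x => ⟪p, x⟫) M s → s = sM p)
    {p : EuclideanSpace ℝ (Fin n)} (hp : p ≠ 0) :
    HasGradientAt (fun q => ⟪q, sM q⟫) (sM p) p := by
  rw [hasGradientAt_iff_isLittleO, Asymptotics.isLittleO_iff]
  intro c hc
  obtain ⟨δ, hδ, hδ'⟩ := contact_cont hMc hsM huniq hp hc
  have h1 : ∀ᶠ q in nhds p, q ≠ 0 := eventually_ne_nhds hp
  filter_upwards [h1, Metric.ball_mem_nhds p hδ] with q hq0 hqball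
  have hqc : dist (sM q) (sM p) < c := hδ' q hq0 (Metric.mem_ball.mp hqball)
  have hmem : sM p ∈ M := (hsM p hp).1
  have hmemq : sM q ∈ M := (hsM q hq0).1
  have hid1 : ⟪sM p, q - p⟫ = ⟪q, sM p⟫ - ⟪p, sM p⟫ := by
    rw [real_inner_comm (q - p) (sM p), inner_sub_left]
  have hlow : ⟪q, sM p⟫ ≤ ⟪q, sM q⟫ := (hsM q hq0).2 hmem
  have hup : ⟪p, sM q⟫ ≤ ⟪p, sM p⟫ := (hsM p hp).2 hmemq
  set Eq : ℝ := ⟪q, sM q⟫ - ⟪p, sM p⟫ - ⟪sM p, q - p⟫ with hEq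
  have hE1 : 0 ≤ Eq := by rw [hEq, hid1]; linarith
  have hsplit : Eq = ⟪q - p, sM q - sM p⟫ + (⟪p, sM q⟫ - ⟪p, sM p⟫) := by
    rw [hEq, hid1]
    simp only [inner_sub_left, inner_sub_right]
    ring
  have hE2 : Eq ≤ ‖q - p‖ * ‖sM q - sM p‖ := by
    have := real_inner_le_norm (q - p) (sM q - sM p)
    rw [hsplit]; linarith
  have : ‖Eq‖ ≤ ‖q - p‖ * ‖sM q - sM p‖ := by
    rw [Real.norm_eq_abs, abs_of_nonneg hE1]; exact hE2
  calc ‖Eq‖ ≤ ‖q - p‖ * ‖sM q - sM p‖ := this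
    _ ≤ ‖q - p‖ * c := by
        have : ‖sM q - sM p‖ ≤ c := by rw [← dist_eq_norm]; exact hqc.le
        exact mul_le_mul_of_nonneg_left this (norm_nonneg _)
    _ = c * ‖q - p‖ := mul_comm _ _

/-- Derivative of the norm at a nonzero point. -/
lemma norm_hasFDerivAt {p : EuclideanSpace ℝ (Fin n)} (hp : p ≠ 0) :
    HasFDerivAt (fun q : EuclideanSpace ℝ (Fin n) => ‖q‖)
      (‖p‖⁻¹ • innerSL ℝ p) p := by
  have hpn : ‖p‖ ≠ 0 := norm_ne_zero_iff.mpr hp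
  have hsq : (‖p‖ : ℝ) ^ 2 ≠ 0 := pow_ne_zero 2 hpn
  have hnormsq : HasFDerivAt (fun q : EuclideanSpace ℝ (Fin n) => ‖q‖ ^ 2)
      (2 • innerSL ℝ p) p := (hasStrictFDerivAt_norm_sq p).hasFDerivAt
  have hsqrt : HasDerivAt Real.sqrt (1 / (2 * Real.sqrt (‖p‖ ^ 2))) (‖p‖ ^ 2) :=
    Real.hasDerivAt_sqrt hsq
  have hcomp := hsqrt.comp_hasFDerivAt p hnormsq
  rw [Function.comp_def] at hcomp
  have hfun : (fun q : EuclideanSpace ℝ (Fin n) => Real.sqrt (‖q‖ ^ 2)) =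
      fun q => ‖q‖ := funext fun q => Real.sqrt_sq (norm_nonneg q)
  rw [hfun] at hcomp
  have heq : (1 / (2 * Real.sqrt (‖p‖ ^ 2))) • (2 • innerSL ℝ p) =
      ‖p‖⁻¹ • innerSL ℝ p := by
    rw [Real.sqrt_sq (norm_nonneg p)]
    ext w
    simp only [ContinuousLinearMap.smul_apply, innerSL_apply_apply, smul_eq_mul]
    field_simp
    ring
  rwa [heq] at hcomp

end Aux

/-- Gradient of the lower distance estimate `ρ_lower(p) = ⟪p, s_G(-p) - s_R(p)⟫ / ‖p‖`
with respect to `p`: it equals `(s_G(-p) - s_R(p))/‖p‖ - (ρ_lower(p)/‖p‖²) • p`. -/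
theorem gradient_rho_lower {n : ℕ} (R G : Set (EuclideanSpace ℝ (Fin n)))
    (hRc : IsCompact R) (hRs : StrictConvex ℝ R)
    (hGc : IsCompact G) (hGs : StrictConvex ℝ G)
    (sR sG : EuclideanSpace ℝ (Fin n) → EuclideanSpace ℝ (Fin n))
    (hsR : ∀ p : EuclideanSpace ℝ (Fin n), p ≠ 0 →
      sR p ∈ R ∧ IsMaxOn (fun s => ⟪p, s⟫) R (sR p))
    (hsG : ∀ p : EuclideanSpace ℝ (Fin n), p ≠ 0 →
      sG p ∈ G ∧ IsMaxOn (fun s => ⟪p, s⟫) G (sG p))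
    (huniqR : ∀ p : EuclideanSpace ℝ (Fin n), p ≠ 0 →
      ∀ s ∈ R, IsMaxOn (fun x => ⟪p, x⟫) R s → s = sR p)
    (huniqG : ∀ p : EuclideanSpace ℝ (Fin n), p ≠ 0 →
      ∀ s ∈ G, IsMaxOn (fun x => ⟪p, x⟫) G s → s = sG p)
    (p : EuclideanSpace ℝ (Fin n)) (hp : p ≠ 0) :
    HasGradientAt (fun q => ⟪q, sG (-q) - sR q⟫ / ‖q‖)
      (‖p‖⁻¹ • (sG (-p) - sR p) -
        ((⟪p, sG (-p) - sR p⟫ / ‖p‖) / ‖p‖ ^ 2) • p) p := by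
  have hpn : ‖p‖ ≠ 0 := norm_ne_zero_iff.mpr hp
  have hnp : (-p : EuclideanSpace ℝ (Fin n)) ≠ 0 := neg_ne_zero.mpr hp
  -- derivative of the R-support function
  have hR' : HasFDerivAt (fun q => ⟪q, sR q⟫)
      (InnerProductSpace.toDual ℝ _ (sR p)) p :=
    hasGradientAt_iff_hasFDerivAt.mp (support_hasGradientAt hRc hsR huniqR hp)
  -- derivative of the G-support function at -p, composed with negation
  have hG' : HasFDerivAt (fun q => ⟪q, sG q⟫)
      (InnerProductSpace.toDual ℝ _ (sG (-p))) (-p) :=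
    hasGradientAt_iff_hasFDerivAt.mp (support_hasGradientAt hGc hsG huniqG hnp)
  have hneg : HasFDerivAt (fun q : EuclideanSpace ℝ (Fin n) => -q)
      (-(ContinuousLinearMap.id ℝ _)) p := (hasFDerivAt_id p).neg
  have hGcomp : HasFDerivAt (fun q : EuclideanSpace ℝ (Fin n) => ⟪-q, sG (-q)⟫)
      ((InnerProductSpace.toDual ℝ _ (sG (-p))).comp (-(ContinuousLinearMap.id ℝ _))) p :=
    hG'.comp p hneg
  -- numerator
  have hN : HasFDerivAt (fun q : EuclideanSpace ℝ (Fin n) => -⟪-q, sG (-q)⟫ - ⟪q, sR q⟫)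
      (-((InnerProductSpace.toDual ℝ _ (sG (-p))).comp (-(ContinuousLinearMap.id ℝ _))) -
        InnerProductSpace.toDual ℝ _ (sR p)) p := hGcomp.neg.sub hR'
  -- inverse norm
  have hnorm := norm_hasFDerivAt hp
  have hinv : HasFDerivAt (fun q : EuclideanSpace ℝ (Fin n) => ‖q‖⁻¹)
      ((-(‖p‖ ^ 2)⁻¹ : ℝ) • (‖p‖⁻¹ • innerSL ℝ p)) p := by
    have := (hasDerivAt_inv hpn).comp_hasFDerivAt p hnorm
    rwa [Function.comp_def] at this
  have hmul := hN.mul hinv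
  -- identify the function
  have hfun : (fun q : EuclideanSpace ℝ (Fin n) =>
      (-⟪-q, sG (-q)⟫ - ⟪q, sR q⟫) * ‖q‖⁻¹) =
      fun q => ⟪q, sG (-q) - sR q⟫ / ‖q‖ := by
    funext q
    rw [inner_neg_left, inner_sub_right, div_eq_mul_inv]
    ring_nf
  simp only [Pi.mul_def] at hmul
  rw [hfun] at hmul
  rw [hasGradientAt_iff_hasFDerivAt]
  refine hmul.congr_fderiv ?_
  apply ContinuousLinearMap.ext
  intro w
  simp only [ContinuousLinearMap.add_apply, ContinuousLinearMap.smul_apply,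
    ContinuousLinearMap.comp_apply, ContinuousLinearMap.neg_apply,
    ContinuousLinearMap.sub_apply, ContinuousLinearMap.coe_id', id_eq,
    innerSL_apply_apply, InnerProductSpace.toDual_apply_apply, inner_neg_right,
    inner_sub_left, inner_sub_right, real_inner_smul_left, smul_eq_mul]
  field_simp
  rw [inner_neg_left]
  ring
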